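/- Let a : ℕ → ℝ be a sequence with 0 ≤ a(j) ≤ 1 for all j. Let K, L₀ ≥ 1 and L be natural numbers with K·L₀ ≤ L ≤ (K+1)·L₀. Then there exists n ∈ {0, 1, …, L₀−1} such that (1/K)·∑_{k=0}^{K−1} a(k·L₀ + n) ≥ (1/L)·∑_{j=0}^{L−1} a(j) − L₀/L. -/

import Mathlib

open Finset

lemma block_sum_eq (a : ℕ → ℝ) (K L₀ : ℕ) :
    ∑ m ∈ range L₀, ∑ k ∈ range K, a (k * L₀ + m) = ∑ j ∈ range (K * L₀), a j := by
  induction K with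
  | zero => simp
  | succ K ih =>
    rw [Nat.succ_mul, Finset.sum_range_add, ← ih]
    simp only [Finset.sum_range_succ, Finset.sum_add_distrib]

/-- Pigeonhole averaging estimate from the proof of Lemma 8.8 (manyinY): reordering a
Birkhoff average of length `L` into `K` blocks of step length `L₀` with offset `n`, one
of the `L₀` offsets achieves an average at least the full average minus `L₀/L`. -/
theorem pigeonhole_averaging (a : ℕ → ℝ) (ha : ∀ j, 0 ≤ a j ∧ a j ≤ 1)
    (K L₀ L : ℕ) (hK : 1 ≤ K) (hL₀ : 1 ≤ L₀)
    (h1 : K * L₀ ≤ L) (h2 : L ≤ (K + 1) * L₀) :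
    ∃ n < L₀, (K : ℝ)⁻¹ * ∑ k ∈ Finset.range K, a (k * L₀ + n) ≥
      (L : ℝ)⁻¹ * ∑ j ∈ Finset.range L, a j - (L₀ : ℝ) / L := by
  have hKpos : (0:ℝ) < K := by exact_mod_cast hK
  have hL₀pos : (0:ℝ) < L₀ := by exact_mod_cast hL₀
  have hLnat : 1 ≤ L := le_trans (Nat.one_le_iff_ne_zero.mpr (by positivity)) h1
  have hLpos : (0:ℝ) < L := by exact_mod_cast hLnat
  set T : ℝ := ∑ j ∈ Finset.range L, a j with hT
  set S : ℝ := ∑ j ∈ Finset.range (K * L₀), a j with hS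
  -- tail bound : T - S ≤ L₀
  have htail : T - S ≤ (L₀ : ℝ) := by
    have hsub : range (K * L₀) ⊆ range L := Finset.range_subset_range.mpr h1
    have hTS : T - S = ∑ j ∈ range L \ range (K * L₀), a j := by
      have := Finset.sum_sdiff (f := a) hsub
      rw [hT, hS]; linarith
    rw [hTS]
    calc ∑ j ∈ range L \ range (K * L₀), a j
        ≤ ∑ _j ∈ range L \ range (K * L₀), (1:ℝ) :=
          Finset.sum_le_sum fun j _ => (ha j).2
      _ = ((range L \ range (K * L₀)).card : ℝ) := by simp
      _ ≤ (L₀ : ℝ) := by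
          rw [Finset.card_sdiff_of_subset hsub]
          simp only [Finset.card_range]
          have h2' : L ≤ K * L₀ + L₀ := le_trans h2 (le_of_eq (by ring))
          have hnat : L - K * L₀ ≤ L₀ := by omega
          exact_mod_cast hnat
  -- exists m with block sum ≥ average S / L₀
  have hsum : ∑ _m ∈ range L₀, S / (L₀ : ℝ)
      ≤ ∑ m ∈ range L₀, ∑ k ∈ range K, a (k * L₀ + m) := by
    rw [block_sum_eq, Finset.sum_const, Finset.card_range, nsmul_eq_mul,
      mul_comm, div_mul_cancel₀ _ (ne_of_gt hL₀pos)]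
  obtain ⟨m, hm, hmge⟩ := Finset.exists_le_of_sum_le
    (Finset.nonempty_range_iff.mpr (by omega)) hsum
  refine ⟨m, Finset.mem_range.mp hm, ?_⟩
  set Sm : ℝ := ∑ k ∈ range K, a (k * L₀ + m) with hSm
  have hSm0 : 0 ≤ Sm := Finset.sum_nonneg fun k _ => (ha _).1
  rcases le_or_gt T (L₀ : ℝ) with hc | hc
  · have : (L:ℝ)⁻¹ * T - (L₀:ℝ)/L ≤ 0 := by
      rw [div_eq_inv_mul, ← mul_sub]
      exact mul_nonpos_of_nonneg_of_nonpos (by positivity) (by linarith)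
    calc (L:ℝ)⁻¹ * T - (L₀:ℝ)/L ≤ 0 := this
      _ ≤ (K:ℝ)⁻¹ * Sm := by positivity
  · have hKL : (K:ℝ) * L₀ ≤ L := by exact_mod_cast h1
    have h3 : (T - L₀) / ((K:ℝ) * L₀) ≤ (K:ℝ)⁻¹ * Sm := by
      have hstep : (T - L₀) / (L₀:ℝ) ≤ Sm := le_trans (by gcongr; linarith) hmge
      calc (T - L₀) / ((K:ℝ) * L₀) = (K:ℝ)⁻¹ * ((T - L₀) / L₀) := by
            field_simp
        _ ≤ (K:ℝ)⁻¹ * Sm := by gcongr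
    have h4 : (L:ℝ)⁻¹ * T - (L₀:ℝ)/L ≤ (T - L₀) / ((K:ℝ) * L₀) := by
      have : (L:ℝ)⁻¹ * T - (L₀:ℝ)/L = (T - L₀) / L := by ring
      rw [this]
      gcongr
    exact le_trans h4 h3
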